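/- Let Q be a right-continuous function of bounded variation on [0,1] with Q(0)=Q(1) (so ∫₀¹ dQ = 0), satisfying ∫₀¹ s^{−b} d|Q|(s) < ∞ for some b > 0, and let v : (0,1) → ℂ be bounded continuous with ∫₀¹ v(st) dQ(s) = 0 for all 0 < t < 1. Then for all complex z with 0 < Re z < b, Λ(z)·X(z) = K(z), where Λ(z) = ∫₀¹ s^{−z} dQ(s), X(z) = ∫₀¹ t^{z−1} v(t) dt, and K(z) = ∫₀¹ s^{−z} (∫_s¹ t^{z−1} v(t) dt) dQ(s). -/

import Mathlib

open MeasureTheory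

lemma stmt15_meas_cpow (w : ℂ) : Measurable (fun t : ℝ => (t : ℂ) ^ w) := by
  have h : (fun t : ℝ => (t : ℂ) ^ w) = fun t : ℝ =>
      if t = 0 then (0 : ℂ) ^ w else Complex.exp (Complex.log t * w) := by
    funext t
    split_ifs with ht
    · simp [ht]
    · rw [Complex.cpow_def_of_ne_zero (by exact_mod_cast ht)]
  rw [h]
  exact Measurable.ite (measurableSet_eq) measurable_const
    (Complex.measurable_exp.comp
      ((Complex.measurable_log.comp Complex.measurable_ofReal).mul measurable_const))

lemma stmt15_meas_indicator {v : ℝ → ℂ} (h : ContinuousOn v (Set.Ioo 0 1)) :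
    Measurable ((Set.Ioo (0:ℝ) 1).indicator v) := by
  classical
  have h1 := ContinuousOn.measurable_piecewise (g := fun _ : ℝ => (0:ℂ)) h
    continuousOn_const measurableSet_Ioo
  have h2 : (Set.Ioo (0:ℝ) 1).indicator v
      = (Set.Ioo (0:ℝ) 1).piecewise v (fun _ => 0) := by
    funext x
    by_cases hx : x ∈ Set.Ioo (0:ℝ) 1 <;> simp [hx]
  rw [h2]; exact h1

lemma stmt15_key (b : ℝ) (μ : Measure ℝ) [IsFiniteMeasure μ]
    (hsupp : μ (Set.Ioc (0 : ℝ) 1)ᶜ = 0)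
    (hint : Integrable (fun s : ℝ => s ^ (-b)) μ)
    (w : ℝ → ℂ) (hwm : Measurable w) (C : ℝ) (hC : ∀ x, ‖w x‖ ≤ C)
    (z : ℂ) (hz0 : 0 < z.re) (hzb : z.re < b) :
    (∫ s : ℝ, (s : ℂ) ^ (-z) ∂μ) * (∫ t in Set.Ioo (0 : ℝ) 1, (t : ℂ) ^ (z - 1) * w t)
      - (∫ s : ℝ, (s : ℂ) ^ (-z) * (∫ t in Set.Ioo s 1, (t : ℂ) ^ (z - 1) * w t) ∂μ)
    = ∫ u in Set.Ioo (0 : ℝ) 1, (u : ℂ) ^ (z - 1) * (∫ s : ℝ, w (s * u) ∂μ) := by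
  have hmem : ∀ᵐ s ∂μ, s ∈ Set.Ioc (0:ℝ) 1 := by
    rw [ae_iff]
    exact hsupp
  set g : ℝ → ℂ := fun t => (t : ℂ) ^ (z - 1) * w t with hgdef
  have hgm : Measurable g := (stmt15_meas_cpow (z - 1)).mul hwm
  have hC0 : 0 ≤ C := le_trans (norm_nonneg _) (hC 0)
  have hrint : IntegrableOn (fun t : ℝ => t ^ (z.re - 1)) (Set.Ioo (0:ℝ) 1) :=
    (intervalIntegral.integrableOn_Ioo_rpow_iff one_pos).2 (by linarith)
  have hnormg : ∀ t ∈ Set.Ioo (0:ℝ) 1, ‖g t‖ ≤ C * t ^ (z.re - 1) := by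
    intro t ht
    have : ‖g t‖ = t ^ (z.re - 1) * ‖w t‖ := by
      rw [hgdef]
      simp only [norm_mul]
      rw [Complex.norm_cpow_eq_rpow_re_of_pos ht.1]
      norm_num [Complex.sub_re]
    rw [this, mul_comm C]
    exact mul_le_mul_of_nonneg_left (hC t) (Real.rpow_nonneg ht.1.le _)
  have hgint : IntegrableOn g (Set.Ioo (0:ℝ) 1) := by
    refine Integrable.mono' (hrint.const_mul C) hgm.aestronglyMeasurable ?_
    filter_upwards [ae_restrict_mem measurableSet_Ioo] with t ht
    exact hnormg t ht
  set X : ℂ := ∫ t in Set.Ioo (0:ℝ) 1, g t with hXdef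
  -- splitting the integral
  have hsplit : ∀ s ∈ Set.Ioc (0:ℝ) 1,
      X = (∫ t in Set.Ioo (0:ℝ) s, g t) + ∫ t in Set.Ioo s 1, g t := by
    intro s hs
    have h1 : IntervalIntegrable g volume 0 s := by
      rw [intervalIntegrable_iff_integrableOn_Ioo_of_le hs.1.le]
      exact hgint.mono_set (Set.Ioo_subset_Ioo le_rfl hs.2)
    have h2 : IntervalIntegrable g volume s 1 := by
      rw [intervalIntegrable_iff_integrableOn_Ioo_of_le hs.2]
      exact hgint.mono_set (Set.Ioo_subset_Ioo hs.1.le le_rfl)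
    have := intervalIntegral.integral_add_adjacent_intervals h1 h2
    rw [intervalIntegral.integral_of_le hs.1.le, intervalIntegral.integral_of_le hs.2,
      intervalIntegral.integral_of_le (le_trans hs.1.le hs.2),
      integral_Ioc_eq_integral_Ioo, integral_Ioc_eq_integral_Ioo,
      integral_Ioc_eq_integral_Ioo] at this
    rw [hXdef, ← this]
  -- substitution t = s * u
  have hmain : ∀ s ∈ Set.Ioc (0:ℝ) 1,
      (∫ u in Set.Ioo (0:ℝ) 1, (u : ℂ) ^ (z - 1) * w (s * u))
        = (s : ℂ) ^ (-z) * ∫ t in Set.Ioo (0:ℝ) s, g t := by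
    intro s hs
    have hs0 : (0:ℝ) < s := hs.1
    have hsne : (s : ℂ) ≠ 0 := by exact_mod_cast ne_of_gt hs0
    have hcomp : (∫ u in (0:ℝ)..1, g (s * u)) = s⁻¹ • ∫ t in (0:ℝ)..s, g t := by
      have := intervalIntegral.integral_comp_mul_left g (ne_of_gt hs0) (a := 0) (b := 1)
      simpa using this
    have h0s : (∫ t in Set.Ioo (0:ℝ) s, g t) = ∫ t in (0:ℝ)..s, g t := by
      rw [intervalIntegral.integral_of_le hs0.le, integral_Ioc_eq_integral_Ioo]
    have hIoo : (∫ u in Set.Ioo (0:ℝ) 1, g (s * u)) = ∫ u in (0:ℝ)..1, g (s * u) := by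
      rw [intervalIntegral.integral_of_le zero_le_one, integral_Ioc_eq_integral_Ioo]
    have hfactor : (∫ u in Set.Ioo (0:ℝ) 1, g (s * u))
        = (s : ℂ) ^ (z - 1) * ∫ u in Set.Ioo (0:ℝ) 1, (u : ℂ) ^ (z - 1) * w (s * u) := by
      rw [← integral_const_mul]
      refine setIntegral_congr_fun measurableSet_Ioo ?_
      intro u hu
      have : ((s * u : ℝ) : ℂ) ^ (z - 1) = (s : ℂ) ^ (z - 1) * (u : ℂ) ^ (z - 1) := by
        push_cast
        exact Complex.mul_cpow_ofReal_nonneg hs0.le hu.1.le (z - 1)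
      simp only [hgdef]
      rw [this]
      ring
    -- combine
    have hpow : (s : ℂ) ^ (-z) * ((s : ℝ) • ((s : ℂ) ^ (z - 1)
        * ∫ u in Set.Ioo (0:ℝ) 1, (u : ℂ) ^ (z - 1) * w (s * u)))
        = ∫ u in Set.Ioo (0:ℝ) 1, (u : ℂ) ^ (z - 1) * w (s * u) := by
      rw [Complex.real_smul]
      have h1 : (s : ℂ) * (s : ℂ) ^ (z - 1) = (s : ℂ) ^ z := by
        rw [Complex.cpow_sub _ _ hsne, Complex.cpow_one]
        field_simp
      have h2 : (s : ℂ) ^ (-z) * (s : ℂ) ^ z = 1 := by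
        rw [← Complex.cpow_add _ _ hsne]
        simp
      calc (s : ℂ) ^ (-z) * ((s : ℂ) * ((s : ℂ) ^ (z - 1)
            * ∫ u in Set.Ioo (0:ℝ) 1, (u : ℂ) ^ (z - 1) * w (s * u)))
          = ((s : ℂ) ^ (-z) * ((s : ℂ) * (s : ℂ) ^ (z - 1)))
            * ∫ u in Set.Ioo (0:ℝ) 1, (u : ℂ) ^ (z - 1) * w (s * u) := by ring
        _ = _ := by rw [h1, h2, one_mul]
    have e2 : (s:ℝ) • (∫ u in Set.Ioo (0:ℝ) 1, g (s * u))
        = ∫ t in Set.Ioo (0:ℝ) s, g t := by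
      rw [hIoo, hcomp, ← h0s, smul_smul, mul_inv_cancel₀ (ne_of_gt hs0), one_smul]
    rw [← e2, hfactor]
    exact hpow.symm
  -- Fubini setup
  set ν : Measure ℝ := volume.restrict (Set.Ioo (0:ℝ) 1) with hνdef
  have hνfin : IsFiniteMeasure ν := by
    constructor
    rw [hνdef, Measure.restrict_apply_univ, Real.volume_Ioo]
    simp
  set f : ℝ → ℝ → ℂ := fun s u => (u : ℂ) ^ (z - 1) * w (s * u) with hfdef
  have hfm : Measurable (Function.uncurry f) :=
    ((stmt15_meas_cpow (z - 1)).comp measurable_snd).mul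
      (hwm.comp (measurable_fst.mul measurable_snd))
  have hae2 : ∀ᵐ p : ℝ × ℝ ∂μ.prod ν, p.2 ∈ Set.Ioo (0:ℝ) 1 := by
    rw [ae_iff]
    refine measure_mono_null (fun p hp => ?_)
      (?_ : μ.prod ν (Set.univ ×ˢ (Set.Ioo (0:ℝ) 1)ᶜ) = 0)
    · exact ⟨Set.mem_univ _, hp⟩
    · rw [Measure.prod_prod, hνdef,
        Measure.restrict_apply measurableSet_Ioo.compl, Set.compl_inter_self]
      simp
  have hfint : Integrable (Function.uncurry f) (μ.prod ν) := by
    refine Integrable.mono'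
      (Integrable.mul_prod (integrable_const C) hrint) hfm.aestronglyMeasurable ?_
    filter_upwards [hae2] with p hp
    have : ‖Function.uncurry f p‖ = p.2 ^ (z.re - 1) * ‖w (p.1 * p.2)‖ := by
      simp only [Function.uncurry, hfdef, norm_mul]
      rw [Complex.norm_cpow_eq_rpow_re_of_pos hp.1]
      norm_num [Complex.sub_re]
    rw [this, mul_comm C]
    exact mul_le_mul_of_nonneg_left (hC _) (Real.rpow_nonneg hp.1.le _)
  have hswap : (∫ s, (∫ u, f s u ∂ν) ∂μ) = ∫ u, (∫ s, f s u ∂μ) ∂ν :=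
    integral_integral_swap hfint
  have hHint : Integrable (fun s => ∫ u, f s u ∂ν) μ := hfint.integral_prod_left
  -- integrability of s ↦ s^{-z}
  have hsz : Integrable (fun s : ℝ => (s : ℂ) ^ (-z)) μ := by
    refine Integrable.mono' hint (stmt15_meas_cpow (-z)).aestronglyMeasurable ?_
    filter_upwards [hmem] with s hs
    rw [Complex.norm_cpow_eq_rpow_re_of_pos hs.1]
    simp only [Complex.neg_re]
    exact Real.rpow_le_rpow_of_exponent_ge hs.1 hs.2 (by linarith)
  have hL : Integrable (fun s : ℝ => (s : ℂ) ^ (-z) * X) μ := hsz.mul_const X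
  -- rewrite the K-integrand a.e.
  have hFcong : ∀ᵐ s : ℝ ∂μ, (s : ℂ) ^ (-z) * (∫ t in Set.Ioo s 1, g t)
      = (s : ℂ) ^ (-z) * X - ∫ u, f s u ∂ν := by
    filter_upwards [hmem] with s hs
    have h1 := hsplit s hs
    have h2 := hmain s hs
    have h3 : (∫ u, f s u ∂ν) = (s : ℂ) ^ (-z) * ∫ t in Set.Ioo (0:ℝ) s, g t := h2
    rw [h3, h1]
    ring
  calc (∫ s : ℝ, (s : ℂ) ^ (-z) ∂μ) * X
        - (∫ s : ℝ, (s : ℂ) ^ (-z) * (∫ t in Set.Ioo s 1, g t) ∂μ)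
      = (∫ s : ℝ, (s : ℂ) ^ (-z) ∂μ) * X
        - ∫ s : ℝ, ((s : ℂ) ^ (-z) * X - ∫ u, f s u ∂ν) ∂μ := by
        rw [integral_congr_ae hFcong]
    _ = (∫ s : ℝ, (s : ℂ) ^ (-z) ∂μ) * X
        - ((∫ s : ℝ, (s : ℂ) ^ (-z) * X ∂μ) - ∫ s : ℝ, (∫ u, f s u ∂ν) ∂μ) := by
        rw [integral_sub hL hHint]
    _ = ∫ s : ℝ, (∫ u, f s u ∂ν) ∂μ := by
        rw [integral_mul_const]
        ring
    _ = ∫ u, (∫ s, f s u ∂μ) ∂ν := hswap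
    _ = ∫ u in Set.Ioo (0:ℝ) 1, (u : ℂ) ^ (z - 1) * (∫ s : ℝ, w (s * u) ∂μ) := by
        rw [hνdef]
        refine setIntegral_congr_fun measurableSet_Ioo ?_
        intro u _
        simp only [hfdef]
        rw [integral_const_mul]

theorem stmt15 (b : ℝ) (hb : 0 < b)
    (Q₁ Q₂ : Measure ℝ) [IsFiniteMeasure Q₁] [IsFiniteMeasure Q₂]
    (hs₁ : Q₁ (Set.Ioc (0 : ℝ) 1)ᶜ = 0) (hs₂ : Q₂ (Set.Ioc (0 : ℝ) 1)ᶜ = 0)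
    (htot : Q₁ Set.univ = Q₂ Set.univ)
    (hint : Integrable (fun s : ℝ => s ^ (-b)) (Q₁ + Q₂))
    (v : ℝ → ℂ) (hvcont : ContinuousOn v (Set.Ioo 0 1)) (C : ℝ)
    (hvbdd : ∀ t ∈ Set.Ioo (0 : ℝ) 1, ‖v t‖ ≤ C)
    (heq : ∀ t ∈ Set.Ioo (0 : ℝ) 1, ∫ s : ℝ, v (s * t) ∂Q₁ = ∫ s : ℝ, v (s * t) ∂Q₂) :
    ∀ z : ℂ, 0 < z.re → z.re < b →
      ((∫ s : ℝ, (s : ℂ) ^ (-z) ∂Q₁) - (∫ s : ℝ, (s : ℂ) ^ (-z) ∂Q₂)) *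
          (∫ t in Set.Ioo (0 : ℝ) 1, (t : ℂ) ^ (z - 1) * v t) =
        (∫ s : ℝ, (s : ℂ) ^ (-z) * (∫ t in Set.Ioo s 1, (t : ℂ) ^ (z - 1) * v t) ∂Q₁) -
        (∫ s : ℝ, (s : ℂ) ^ (-z) * (∫ t in Set.Ioo s 1, (t : ℂ) ^ (z - 1) * v t) ∂Q₂) := by
  classical
  intro z hz0 hzb
  set w : ℝ → ℂ := (Set.Ioo (0:ℝ) 1).indicator v with hwdef
  have hwm : Measurable w := stmt15_meas_indicator hvcont
  have hwb : ∀ x, ‖w x‖ ≤ max C 0 := by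
    intro x
    by_cases hx : x ∈ Set.Ioo (0:ℝ) 1
    · rw [hwdef, Set.indicator_of_mem hx]
      exact le_trans (hvbdd x hx) (le_max_left _ _)
    · rw [hwdef, Set.indicator_of_notMem hx]
      simp
  have hint₁ : Integrable (fun s : ℝ => s ^ (-b)) Q₁ :=
    hint.mono_measure (Measure.le_add_right le_rfl)
  have hint₂ : Integrable (fun s : ℝ => s ^ (-b)) Q₂ :=
    hint.mono_measure (Measure.le_add_left le_rfl)
  have hmem₁ : ∀ᵐ s ∂Q₁, s ∈ Set.Ioc (0:ℝ) 1 := by rw [ae_iff]; exact hs₁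
  have hmem₂ : ∀ᵐ s ∂Q₂, s ∈ Set.Ioc (0:ℝ) 1 := by rw [ae_iff]; exact hs₂
  have key₁ := stmt15_key b Q₁ hs₁ hint₁ w hwm (max C 0) hwb z hz0 hzb
  have key₂ := stmt15_key b Q₂ hs₂ hint₂ w hwm (max C 0) hwb z hz0 hzb
  -- translate v ↔ w in the goal
  have hX : (∫ t in Set.Ioo (0:ℝ) 1, (t : ℂ) ^ (z - 1) * v t)
      = ∫ t in Set.Ioo (0:ℝ) 1, (t : ℂ) ^ (z - 1) * w t := by
    refine setIntegral_congr_fun measurableSet_Ioo fun t ht => ?_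
    rw [hwdef, Set.indicator_of_mem ht]
  have hKcong : ∀ (Q : Measure ℝ), (∀ᵐ s ∂Q, s ∈ Set.Ioc (0:ℝ) 1) →
      (∫ s : ℝ, (s : ℂ) ^ (-z) * (∫ t in Set.Ioo s 1, (t : ℂ) ^ (z - 1) * v t) ∂Q)
      = ∫ s : ℝ, (s : ℂ) ^ (-z) * (∫ t in Set.Ioo s 1, (t : ℂ) ^ (z - 1) * w t) ∂Q := by
    intro Q hQ
    refine integral_congr_ae ?_
    filter_upwards [hQ] with s hs
    congr 1
    refine setIntegral_congr_fun measurableSet_Ioo fun t ht => ?_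
    have htm : t ∈ Set.Ioo (0:ℝ) 1 := ⟨lt_trans hs.1 ht.1, ht.2⟩
    rw [hwdef, Set.indicator_of_mem htm]
  have hK₁ := hKcong Q₁ hmem₁
  have hK₂ := hKcong Q₂ hmem₂
  have hwcong : ∀ (Q : Measure ℝ), (∀ᵐ s ∂Q, s ∈ Set.Ioc (0:ℝ) 1) →
      ∀ u ∈ Set.Ioo (0:ℝ) 1, (∫ s : ℝ, w (s * u) ∂Q) = ∫ s : ℝ, v (s * u) ∂Q := by
    intro Q hQ u hu
    refine integral_congr_ae ?_
    filter_upwards [hQ] with s hs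
    have : s * u ∈ Set.Ioo (0:ℝ) 1 :=
      ⟨mul_pos hs.1 hu.1, lt_of_le_of_lt (mul_le_of_le_one_left hu.1.le hs.2) hu.2⟩
    rw [hwdef, Set.indicator_of_mem this]
  have hR : (∫ u in Set.Ioo (0:ℝ) 1, (u : ℂ) ^ (z - 1) * (∫ s : ℝ, w (s * u) ∂Q₁))
      = ∫ u in Set.Ioo (0:ℝ) 1, (u : ℂ) ^ (z - 1) * (∫ s : ℝ, w (s * u) ∂Q₂) := by
    refine setIntegral_congr_fun measurableSet_Ioo fun u hu => ?_
    rw [hwcong Q₁ hmem₁ u hu, hwcong Q₂ hmem₂ u hu, heq u hu]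
  rw [hX, hK₁, hK₂]
  linear_combination key₁ - key₂ + hR
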